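/- Let V be a K-module with rank(V) ≥ 3 and let f, f' be semilinear automorphisms of V such that f⟨v⟩ = f'⟨v⟩ for every v ∈ V (where ⟨v⟩ is the cyclic submodule generated by v). Then there exists a nonzero scalar α ∈ K* independent of v such that f'(v) = α·f(v) for all v ∈ V. -/
import Mathlib


/-- Let `V` be a module over a division ring `K` of rank at least 3, and let
`f`, `f'` be semilinear automorphisms of `V` which agree on all cyclic
submodules, i.e. `f ⟨v⟩ = f' ⟨v⟩` for every `v`. Then there is a nonzero scalar
`α ∈ K*`, independent of `v`, with `f' v = α • f v` for all `v`. -/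
theorem semilinear_autos_equal_on_cyclic_submodules
    (K V : Type*) [DivisionRing K] [AddCommGroup V] [Module K V]
    (hrank : 3 ≤ Module.rank K V)
    (f f' : V ≃+ V)
    (hf : ∃ θ : K ≃+* K, ∀ (a : K) (v : V), f (a • v) = θ a • f v)
    (hf' : ∃ θ' : K ≃+* K, ∀ (a : K) (v : V), f' (a • v) = θ' a • f' v)
    (hspan : ∀ v : V,
      (f) '' ((Submodule.span K {v} : Submodule K V) : Set V) =
      (f') '' ((Submodule.span K {v} : Submodule K V) : Set V)) :
    ∃ α : Kˣ, ∀ v : V, f' v = (α : K) • f v := by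
  obtain ⟨θ, hθ⟩ := hf
  set h : V → V := fun w => f' (f.symm w) with hh
  have hadd : ∀ u w : V, h (u + w) = h u + h w := by
    intro u w; simp [hh, map_add]
  -- h preserves every line
  have hmem : ∀ w : V, ∃ c : K, c • w = h w := by
    intro w
    have h1 : h w ∈ f' '' ((Submodule.span K {f.symm w} : Submodule K V) : Set V) :=
      ⟨f.symm w, Submodule.mem_span_singleton_self _, rfl⟩
    rw [← hspan] at h1
    obtain ⟨x, hx, hfx⟩ := h1
    rw [SetLike.mem_coe, Submodule.mem_span_singleton] at hx
    obtain ⟨a, rfl⟩ := hx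
    rw [hθ, f.apply_symm_apply] at hfx
    exact ⟨θ a, hfx⟩
  choose c hc using hmem
  -- for every u there is a vector outside span {u}
  have hout : ∀ u : V, ∃ w : V, w ∉ Submodule.span K {u} := by
    intro u
    by_contra hcon
    push_neg at hcon
    have htop : (Submodule.span K {u} : Submodule K V) = ⊤ :=
      eq_top_iff.2 fun x _ => hcon x
    have h1 : Module.rank K V ≤ 1 := by
      have := rank_span_le (R := K) (M := V) {u}
      rw [htop] at this
      simpa using this
    have : (3 : Cardinal) ≤ 1 := hrank.trans h1
    norm_num at this
  -- independence step
  have key : ∀ u w : V, u ≠ 0 → w ∉ Submodule.span K {u} → c u = c w := by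
    intro u w hu hw
    have heq : c (u + w) • u + c (u + w) • w = c u • u + c w • w := by
      rw [← smul_add, hc, hadd, hc, hc]
    have heq2 : (c (u + w) - c u) • u = (c w - c (u + w)) • w := by
      rw [sub_smul, sub_smul]
      rw [sub_eq_sub_iff_add_eq_add, heq, add_comm]
    have hcw : c w = c (u + w) := by
      by_contra hne
      apply hw
      have : w = (c w - c (u + w))⁻¹ • ((c (u + w) - c u) • u) := by
        rw [heq2, smul_smul, inv_mul_cancel₀ (sub_ne_zero.2 hne), one_smul]
      rw [this]
      exact Submodule.smul_mem _ _ (Submodule.smul_mem _ _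
        (Submodule.mem_span_singleton_self u))
    have : (c (u + w) - c u) • u = 0 := by
      rw [heq2, ← hcw, sub_self, zero_smul]
    have h0 : c (u + w) - c u = 0 := by
      by_contra hne
      exact hu (by simpa [hne] using (smul_eq_zero.mp this))
    rw [← sub_eq_zero.mp h0, ← hcw]
  -- a nonzero vector
  have hne : ∃ u0 : V, u0 ≠ 0 := by
    by_contra hcon
    push_neg at hcon
    have : Subsingleton V := ⟨fun a b => by rw [hcon a, hcon b]⟩
    have h0 : Module.rank K V = 0 := rank_subsingleton' K V
    rw [h0] at hrank
    norm_num at hrank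
  obtain ⟨u0, hu0⟩ := hne
  -- c is constant on nonzero vectors
  have hconst : ∀ v : V, v ≠ 0 → c v = c u0 := by
    intro v hv
    obtain ⟨w, hw⟩ := hout u0
    by_cases hvmem : v ∈ Submodule.span K {u0}
    · have hw' : w ∉ Submodule.span K {v} := by
        intro hmem
        apply hw
        obtain ⟨a, rfl⟩ := Submodule.mem_span_singleton.mp hvmem
        obtain ⟨b, rfl⟩ := Submodule.mem_span_singleton.mp hmem
        rw [smul_smul]
        exact Submodule.smul_mem _ _ (Submodule.mem_span_singleton_self u0)
      rw [key v w hv hw', key u0 w hu0 hw]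
    · exact (key u0 v hu0 hvmem).symm
  -- α := c u0
  have hα : c u0 ≠ 0 := by
    intro h0
    apply hu0
    have h1 : h u0 = 0 := by rw [← hc, h0, zero_smul]
    have : f' (f.symm u0) = f' 0 := by simpa [hh, map_zero] using h1
    have := f'.injective this
    simpa using f.symm.injective (by simpa using this)
  refine ⟨Units.mk0 (c u0) hα, fun v => ?_⟩
  by_cases hv : f v = 0
  · have hv0 : v = 0 := by
      have := f.injective (by simpa using hv)
      simpa using this
    simp [hv0]
  · have := hc (f v)
    rw [hconst (f v) hv] at this
    simpa [hh] using this.symm
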